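/- Let s ≥ 1 be a natural number and let a : ℤ → ℝ satisfy a_k = 0 for all |k| > s. Define f : ℝ → ℝ by f(t) = ∑_{|k|≤s} a_k e^{2πikt}, and assume f(t) > 0 for every t ∈ ℝ (in particular f is real-valued). Set κ = (sup_t f(t))/(inf_t f(t)), λ = ((√κ − 1)/(√κ + 1))^{1/s}, and C = (1/inf_t f(t)) · max{1, (1+√κ)²/(2κ)}. Let b_k = ∫₀¹ e^{−2πikt}/f(t) dt be the Fourier coefficients of 1/f. Then |b_k| ≤ C·λ^{|k|} for every k ∈ ℤ. -/

import Mathlib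

open Polynomial Finset

lemma natDegree_cheb_T_le : ∀ j : ℕ, (Polynomial.Chebyshev.T ℝ (j : ℤ)).natDegree ≤ j := by
  intro j
  induction j using Nat.twoStepInduction with
  | zero => simp [Polynomial.Chebyshev.T_zero]
  | one => simp [Polynomial.Chebyshev.T_one]
  | more n ih1 ih2 =>
    rw [show ((n + 2 : ℕ) : ℤ) = (n : ℤ) + 2 by push_cast; ring,
      Polynomial.Chebyshev.T_add_two]
    refine le_trans (Polynomial.natDegree_sub_le _ _) ?_
    have h1 : (2 * X * Polynomial.Chebyshev.T ℝ ((n : ℤ) + 1)).natDegree ≤ n + 2 := by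
      refine le_trans (Polynomial.natDegree_mul_le) ?_
      have ha : (2 * X : ℝ[X]).natDegree ≤ 1 := by
        refine le_trans (Polynomial.natDegree_mul_le) ?_
        simp
      have h2 : (Polynomial.Chebyshev.T ℝ ((n : ℤ) + 1)).natDegree ≤ n + 1 := by
        simpa [show (((n+1 : ℕ)) : ℤ) = (n : ℤ) + 1 by push_cast; ring] using ih2
      omega
    have h2 : (Polynomial.Chebyshev.T ℝ (n : ℤ)).natDegree ≤ n := ih1
    simp only [max_le_iff]
    omega

lemma cheb_root_aux (A q E : ℝ) (n : ℕ) (hq : q ≠ 0) (hq2 : (1 : ℝ) - q ^ 2 ≠ 0)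
    (hE : E = 2 * A * (-1 : ℝ) ^ (n + 1) * q ^ (n + 1) / (1 - q ^ 2)) :
    (Polynomial.C A * (1 - Polynomial.C q * X)
      - Polynomial.C E * (X ^ n * (X + Polynomial.C q)) : ℝ[X]).IsRoot (-q⁻¹) := by
  have hsgn : (-1 : ℝ) ^ (n + 1) * (-1 : ℝ) ^ n = -1 := by
    rw [← pow_add]; exact Odd.neg_one_pow ⟨n, by ring⟩
  have hqq : q * q⁻¹ = 1 := mul_inv_cancel₀ hq
  have hpow : q ^ (n + 1) * (q⁻¹) ^ n = q := by
    calc q ^ (n + 1) * (q⁻¹) ^ n = (q * q⁻¹) ^ n * q := by rw [mul_pow, pow_succ]; ring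
    _ = q := by rw [hqq]; simp
  have hTT : (-1 : ℝ) ^ (n + 1) * q ^ (n + 1) * ((-1 : ℝ) ^ n * (q⁻¹) ^ n) = -q := by
    calc (-1 : ℝ) ^ (n + 1) * q ^ (n + 1) * ((-1 : ℝ) ^ n * (q⁻¹) ^ n)
        = ((-1 : ℝ) ^ (n + 1) * (-1 : ℝ) ^ n) * (q ^ (n + 1) * (q⁻¹) ^ n) := by ring
    _ = -q := by rw [hsgn, hpow]; ring
  simp only [Polynomial.IsRoot, Polynomial.eval_sub, Polynomial.eval_mul,
    Polynomial.eval_C, Polynomial.eval_one, Polynomial.eval_add, Polynomial.eval_pow,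
    Polynomial.eval_X]
  rw [show ((-q⁻¹ : ℝ)) ^ n = (-1 : ℝ) ^ n * (q⁻¹) ^ n from by rw [neg_pow]]
  have h1 : A * (1 - q * -q⁻¹) = 2 * A := by rw [mul_neg, hqq]; ring
  have h2 : E * ((-1 : ℝ) ^ n * (q⁻¹) ^ n * (-q⁻¹ + q))
      = 2 * A / (1 - q ^ 2) * (((-1 : ℝ) ^ (n + 1) * q ^ (n + 1) * ((-1 : ℝ) ^ n * (q⁻¹) ^ n)) * (-q⁻¹ + q)) := by
    rw [hE]; ring
  rw [h1, h2, hTT]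
  have h3 : -q * (-q⁻¹ + q) = 1 - q ^ 2 := by
    have : q * q⁻¹ = 1 := hqq
    nlinarith [this]
  rw [h3]
  field_simp
  ring

set_option maxHeartbeats 2000000 in
lemma cheb_approx (m u : ℝ) (hm : 0 < m) (hu : 1 < u) (n : ℕ) :
    ∃ P : Polynomial ℝ, P.natDegree ≤ n ∧ ∀ x ∈ Set.Icc m (m * u ^ 2),
      |1 / x - P.eval x| ≤ 1 / m * ((1 + u) ^ 2 / (2 * u ^ 2)) * ((u - 1) / (u + 1)) ^ (n + 1) := by
  have hu0 : 0 < u := lt_trans one_pos hu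
  set q : ℝ := (u - 1) / (u + 1) with hq_def
  have hq0 : 0 < q := div_pos (by linarith) (by linarith)
  have hq1 : q < 1 := by rw [div_lt_one (by linarith)]; linarith
  have hq2 : (0:ℝ) < 1 - q ^ 2 := by nlinarith
  set A : ℝ := 1 / (m * u) with hA_def
  have hA0 : 0 < A := by positivity
  set E : ℝ := 2 * A * (-1 : ℝ) ^ (n + 1) * q ^ (n + 1) / (1 - q ^ 2) with hE_def
  set N : ℝ[X] := Polynomial.C A * (1 - Polynomial.C q * X)
      - Polynomial.C E * (X ^ n * (X + Polynomial.C q)) with hN_def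
  have hroot : N.IsRoot (-q⁻¹) := cheb_root_aux A q E n (ne_of_gt hq0) (ne_of_gt hq2) hE_def
  clear_value q A E
  obtain ⟨Q, hfac⟩ := (Polynomial.dvd_iff_isRoot.mpr hroot : (X - Polynomial.C (-q⁻¹)) ∣ N)
  have hNdeg : N.natDegree ≤ n + 1 := by
    refine le_trans (Polynomial.natDegree_sub_le _ _) ?_
    have hb1 : (1 - Polynomial.C q * X : ℝ[X]).natDegree ≤ 1 := by
      refine le_trans (Polynomial.natDegree_sub_le _ _) ?_
      have : (Polynomial.C q * X : ℝ[X]).natDegree ≤ 1 :=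
        le_trans Polynomial.natDegree_mul_le (by simp)
      simp only [Polynomial.natDegree_one, max_le_iff]
      exact ⟨by omega, this⟩
    have hb2 : (X + Polynomial.C q : ℝ[X]).natDegree ≤ 1 := by
      refine le_trans (Polynomial.natDegree_add_le _ _) ?_
      simp
    have h1 : (Polynomial.C A * (1 - Polynomial.C q * X)).natDegree ≤ n + 1 :=
      le_trans (Polynomial.natDegree_C_mul_le _ _) (by omega)
    have h2 : (Polynomial.C E * (X ^ n * (X + Polynomial.C q))).natDegree ≤ n + 1 := by
      refine le_trans (Polynomial.natDegree_C_mul_le _ _) ?_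
      refine le_trans Polynomial.natDegree_mul_le ?_
      simp only [Polynomial.natDegree_X_pow]
      omega
    simp only [max_le_iff]
    exact ⟨h1, h2⟩
  have hQdeg : Q.natDegree ≤ n := by
    rcases eq_or_ne Q 0 with h | h
    · simp [h]
    · have hX : (X - Polynomial.C (-q⁻¹) : ℝ[X]) ≠ 0 := Polynomial.X_sub_C_ne_zero _
      have := Polynomial.natDegree_mul hX h
      rw [← hfac, Polynomial.natDegree_X_sub_C] at this
      omega
  set c : ℝ := m * (1 + u ^ 2) / 2 with hc_def
  set d : ℝ := m * (u ^ 2 - 1) / 2 with hd_def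
  have hd0 : 0 < d := by
    rw [hd_def]
    have : (0:ℝ) < u ^ 2 - 1 := by nlinarith
    positivity
  clear_value c d
  set Pb : ℝ[X] := ∑ j ∈ Finset.range (n + 1),
      Polynomial.C (Q.coeff j) * Polynomial.Chebyshev.T ℝ (j : ℤ) with hPb_def
  set P : ℝ[X] := Polynomial.C q⁻¹ * (Pb.comp (Polynomial.C d⁻¹ * (X - Polynomial.C c)))
    with hP_def
  have hPdeg : P.natDegree ≤ n := by
    refine le_trans Polynomial.natDegree_mul_le ?_
    have h1 : Pb.natDegree ≤ n := by
      refine Polynomial.natDegree_sum_le_of_forall_le _ _ ?_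
      intro j hj
      refine le_trans Polynomial.natDegree_mul_le ?_
      have := natDegree_cheb_T_le j
      have hj' : j ≤ n := by simpa [Nat.lt_succ_iff] using hj
      simp [Polynomial.natDegree_C]
      omega
    have h2 : (Polynomial.C d⁻¹ * (X - Polynomial.C c)).natDegree ≤ 1 := by
      refine le_trans Polynomial.natDegree_mul_le ?_
      simp [Polynomial.natDegree_X_sub_C, Polynomial.natDegree_C]
    refine le_trans ?_ (le_refl n)
    have := Polynomial.natDegree_comp_le (p := Pb) (q := Polynomial.C d⁻¹ * (X - Polynomial.C c))
    simp [Polynomial.natDegree_C]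
    calc (Pb.comp (Polynomial.C d⁻¹ * (X - Polynomial.C c))).natDegree
        ≤ Pb.natDegree * (Polynomial.C d⁻¹ * (X - Polynomial.C c)).natDegree :=
          Polynomial.natDegree_comp_le
      _ ≤ n * 1 := Nat.mul_le_mul h1 h2
      _ = n := by omega
  refine ⟨P, hPdeg, ?_⟩
  rintro x ⟨hx1, hx2⟩
  have hx0 : 0 < x := lt_of_lt_of_le hm hx1
  set y : ℝ := (x - c) / d with hy_def
  have hy1 : -1 ≤ y := by
    rw [hy_def, le_div_iff₀ hd0]
    rw [hc_def, hd_def]; nlinarith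
  have hy2 : y ≤ 1 := by
    rw [hy_def, div_le_iff₀ hd0]
    rw [hc_def, hd_def]; nlinarith
  set θ : ℝ := Real.arccos y with hθ_def
  have hcθ : Real.cos θ = y := Real.cos_arccos hy1 hy2
  set α : ℝ := Real.cos θ with hα_def
  set β : ℝ := Real.sin θ with hβ_def
  have hαβ : α ^ 2 + β ^ 2 = 1 := by
    rw [hα_def, hβ_def]; rw [add_comm]; exact Real.sin_sq_add_cos_sq θ
  set z : ℂ := Complex.exp ((θ : ℂ) * Complex.I) with hz_def
  have hzabs : ‖z‖ = 1 := Complex.norm_exp_ofReal_mul_I θ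
  have hzre : z.re = α := Complex.exp_ofReal_mul_I_re θ
  have hzim : z.im = β := Complex.exp_ofReal_mul_I_im θ
  -- real evaluation of P
  have hPeval : P.eval x = q⁻¹ * ∑ j ∈ Finset.range (n + 1), Q.coeff j * Real.cos (j * θ) := by
    rw [hP_def]
    simp only [Polynomial.eval_mul, Polynomial.eval_C, Polynomial.eval_comp,
      Polynomial.eval_sub, Polynomial.eval_X, hPb_def, Polynomial.eval_finset_sum]
    congr 1
    refine Finset.sum_congr rfl ?_
    intro j hj
    have hyx : d⁻¹ * (x - c) = y := by rw [hy_def]; ring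
    rw [hyx, ← hcθ, Polynomial.Chebyshev.T_real_cos]
    push_cast
    ring_nf
  -- complex evaluation of Q
  set Qz : ℂ := (Q.map (algebraMap ℝ ℂ)).eval z with hQz_def
  have hQzre : Qz.re = ∑ j ∈ Finset.range (n + 1), Q.coeff j * Real.cos (j * θ) := by
    have hdeg : (Q.map (algebraMap ℝ ℂ)).natDegree < n + 1 :=
      lt_of_le_of_lt (le_trans (Polynomial.natDegree_map_le) hQdeg) (Nat.lt_succ_self n)
    rw [hQz_def, Polynomial.eval_eq_sum_range' hdeg, Complex.re_sum]
    refine Finset.sum_congr rfl ?_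
    intro j hj
    have hzj : (z : ℂ) ^ j = Complex.exp (((j * θ : ℝ) : ℂ) * Complex.I) := by
      rw [hz_def, ← Complex.exp_nat_mul]; congr 1; push_cast; ring
    rw [Polynomial.coeff_map]
    have : (algebraMap ℝ ℂ) (Q.coeff j) = ((Q.coeff j : ℝ) : ℂ) := rfl
    rw [this]
    rw [show (((Q.coeff j : ℝ) : ℂ) * z ^ j).re = Q.coeff j * (z ^ j).re by
      simp [Complex.mul_re]]
    rw [hzj, Complex.exp_ofReal_mul_I_re]
  -- the complex factorization identity evaluated at z
  set w : ℂ := 1 + (q : ℂ) * z with hw_def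
  have hwre : w.re = 1 + q * α := by simp [hw_def, Complex.add_re, Complex.mul_re, hzre, hzim]
  have hwim : w.im = q * β := by simp [hw_def, Complex.add_im, Complex.mul_im, hzre, hzim]
  have hnormsq : Complex.normSq w = 1 + 2 * q * α + q ^ 2 := by
    rw [Complex.normSq_apply, hwre, hwim]
    linear_combination (q^2) * hαβ
  have hden0 : (0:ℝ) < 1 + 2 * q * α + q ^ 2 := by nlinarith
  have hw0 : w ≠ 0 := by
    intro h
    rw [h] at hnormsq
    simp only [map_zero] at hnormsq
    linarith
  set Nval : ℂ := (A : ℂ) * (1 - (q : ℂ) * z) - (E : ℂ) * (z ^ n * (z + (q : ℂ))) with hNval_def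
  have hqC0 : (q : ℂ) ≠ 0 := by exact_mod_cast ne_of_gt hq0
  have hNvalEq : Nval = (z + ((q : ℂ))⁻¹) * Qz := by
    have h1 := congrArg (fun p : ℝ[X] => (p.map (algebraMap ℝ ℂ)).eval z) hfac
    simp only [hN_def, Polynomial.map_mul, Polynomial.map_sub, Polynomial.map_add,
      Polynomial.map_pow, Polynomial.map_one, Polynomial.map_C, Polynomial.map_X,
      Polynomial.eval_mul, Polynomial.eval_sub, Polynomial.eval_add, Polynomial.eval_pow,
      Polynomial.eval_one, Polynomial.eval_C, Polynomial.eval_X,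
      Complex.coe_algebraMap] at h1
    rw [hNval_def, ← hQz_def] at *
    rw [h1]
    push_cast
    ring
  have hwq : w = (q : ℂ) * (z + ((q : ℂ))⁻¹) := by
    rw [hw_def]; field_simp; ring
  have hzq0 : (z + ((q : ℂ))⁻¹) ≠ 0 := by
    intro h; apply hw0; rw [hwq, h, mul_zero]
  have hNdivw : Nval / w = ((q : ℂ))⁻¹ * Qz := by
    rw [hNvalEq, show w = (z + ((q : ℂ))⁻¹) * (q : ℂ) by rw [hwq]; ring,
      mul_div_mul_left _ _ hzq0, div_eq_mul_inv]
    ring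
  set W : ℂ := z ^ n * (z + (q : ℂ)) / w with hW_def
  have hWabs : ‖W‖ = 1 := by
    have e1 : Complex.normSq (z + (q : ℂ)) = Complex.normSq w := by
      rw [Complex.normSq_apply, hnormsq]
      simp only [Complex.add_re, Complex.add_im, hzre, hzim, Complex.ofReal_re,
        Complex.ofReal_im, add_zero]
      linear_combination hαβ
    have h1 : ‖z + (q : ℂ)‖ = ‖w‖ := by
      rw [Complex.norm_def, Complex.norm_def, e1]
    have habsw : ‖w‖ ≠ 0 := by
      simpa using hw0
    rw [hW_def, norm_div, norm_mul, norm_pow, hzabs, one_pow, h1, one_mul, div_self habsw]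
  have hPevalC : P.eval x = (Nval / w).re := by
    rw [hNdivw, hPeval]
    rw [show (((q : ℂ))⁻¹ * Qz).re = q⁻¹ * Qz.re by
      rw [show ((q : ℂ))⁻¹ = ((q⁻¹ : ℝ) : ℂ) by push_cast; ring]
      simp [Complex.mul_re]]
    rw [hQzre]
  have hsplit : Nval / w = (A : ℂ) * (1 - (q : ℂ) * z) / w - (E : ℂ) * W := by
    rw [hNval_def, hW_def]; ring
  have hre1 : ((A : ℂ) * (1 - (q : ℂ) * z) / w).re = 1 / x := by
    have ha_re : ((A : ℂ) * (1 - (q : ℂ) * z)).re = A * (1 - q * α) := by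
      simp [Complex.mul_re, Complex.sub_re, Complex.sub_im, Complex.mul_im, hzre, hzim]
    have ha_im : ((A : ℂ) * (1 - (q : ℂ) * z)).im = -(A * (q * β)) := by
      simp [Complex.mul_im, Complex.sub_re, Complex.sub_im, Complex.mul_re, hzre, hzim]
    rw [Complex.div_re, ha_re, ha_im, hwre, hwim, hnormsq, ← add_div]
    have hnum : A * (1 - q * α) * (1 + q * α) + -(A * (q * β)) * (q * β) = A * (1 - q ^ 2) := by
      linear_combination (-(A * q ^ 2)) * hαβ
    rw [hnum]
    have hαx : α = (x - c) / d := by rw [hcθ, hy_def]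
    rw [div_eq_div_iff (ne_of_gt hden0) (ne_of_gt hx0)]
    rw [hαx, hq_def, hA_def, hc_def, hd_def]
    have h1 : u + 1 ≠ 0 := by positivity
    have h2 : m ≠ 0 := ne_of_gt hm
    have h3 : u ≠ 0 := by positivity
    have h4 : u ^ 2 - 1 ≠ 0 := by nlinarith
    field_simp
    ring
  have hkey : 1 / x - P.eval x = E * W.re := by
    rw [hPevalC, hsplit, Complex.sub_re, hre1,
      show ((E : ℂ) * W).re = E * W.re by simp [Complex.mul_re]]
    ring
  rw [hkey]
  have hWre : |W.re| ≤ 1 := by rw [← hWabs]; exact Complex.abs_re_le_norm W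
  have hEabs : |E| = 2 * A * q ^ (n + 1) / (1 - q ^ 2) := by
    rw [hE_def, abs_div, abs_of_pos hq2, abs_mul, abs_mul, abs_mul]
    rw [show |(-1 : ℝ) ^ (n + 1)| = 1 by rw [abs_pow]; simp]
    rw [abs_of_pos (by norm_num : (0:ℝ) < 2), abs_of_pos hA0, abs_of_pos (pow_pos hq0 (n + 1))]
    ring
  have hconst : 2 * A / (1 - q ^ 2) = 1 / m * ((1 + u) ^ 2 / (2 * u ^ 2)) := by
    rw [hA_def, hq_def]
    have h1 : u + 1 ≠ 0 := by positivity
    have h2 : m ≠ 0 := ne_of_gt hm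
    have h3 : u ≠ 0 := by positivity
    have h0 : 1 - ((u - 1) / (u + 1)) ^ 2 = 4 * u / (u + 1) ^ 2 := by
      field_simp
      ring
    rw [h0]
    field_simp
    ring
  calc |E * W.re| = |E| * |W.re| := abs_mul _ _
    _ ≤ |E| * 1 := mul_le_mul_of_nonneg_left hWre (abs_nonneg E)
    _ = 2 * A / (1 - q ^ 2) * q ^ (n + 1) := by rw [mul_one, hEabs]; ring
    _ = 1 / m * ((1 + u) ^ 2 / (2 * u ^ 2)) * q ^ (n + 1) := by rw [hconst]

lemma exp_int_orth (l : ℤ) (hl : l ≠ 0) :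
    (∫ t in (0:ℝ)..1, Complex.exp (2 * (Real.pi : ℂ) * Complex.I * (l : ℂ) * (t : ℂ))) = 0 := by
  have hc : (2 * (Real.pi : ℂ) * Complex.I * (l : ℂ)) ≠ 0 := by
    refine mul_ne_zero (mul_ne_zero (mul_ne_zero two_ne_zero ?_) Complex.I_ne_zero) ?_
    · exact_mod_cast Real.pi_ne_zero
    · exact_mod_cast hl
  rw [integral_exp_mul_complex hc]
  rw [show (2 * (Real.pi : ℂ) * Complex.I * (l : ℂ)) * (1:ℝ) = (l : ℂ) * (2 * Real.pi * Complex.I) by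
    push_cast; ring]
  rw [Complex.exp_int_mul_two_pi_mul_I]
  simp

set_option maxHeartbeats 2000000 in
/-- Exponential decay (after Strohmer/Demko) of the Fourier coefficients of the
reverse `1/f` of an `s`-banded, positive function
`f(t) = ∑_{|k|≤s} a_k e^{2πikt}`: with `κ = sup f / inf f`,
`λ = ((√κ-1)/(√κ+1))^{1/s}` and `C = (1/inf f)·max{1, (1+√κ)²/(2κ)}`, the Fourier
coefficients `b_k` of `1/f` satisfy `|b_k| ≤ C λ^{|k|}`. -/
theorem banded_reverse_exponential_decay (s : ℕ) (hs : 1 ≤ s)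
    (a : ℤ → ℝ) (ha : ∀ k : ℤ, (s : ℤ) < |k| → a k = 0)
    (F : ℝ → ℂ)
    (hF : ∀ t : ℝ, F t = ∑ k ∈ Finset.Icc (-(s : ℤ)) (s : ℤ),
        (a k : ℂ) * Complex.exp (2 * (Real.pi : ℂ) * Complex.I * (k : ℂ) * (t : ℂ)))
    (hreal : ∀ t : ℝ, (F t).im = 0) (hpos : ∀ t : ℝ, 0 < (F t).re)
    (κ lam C : ℝ)
    (hκ : κ = (⨆ t : ℝ, (F t).re) / (⨅ t : ℝ, (F t).re))
    (hlam : lam = ((Real.sqrt κ - 1) / (Real.sqrt κ + 1)) ^ ((1 : ℝ) / (s : ℝ)))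
    (hC : C = (1 / ⨅ t : ℝ, (F t).re) * max 1 ((1 + Real.sqrt κ) ^ 2 / (2 * κ)))
    (b : ℤ → ℂ)
    (hb : ∀ k : ℤ, b k = ∫ t in (0 : ℝ)..1,
        Complex.exp (-(2 * (Real.pi : ℂ) * Complex.I * (k : ℂ) * (t : ℂ))) / F t) :
    ∀ k : ℤ, ‖b k‖ ≤ C * lam ^ k.natAbs := by
  have hFeq : F = fun t : ℝ => ∑ k ∈ Finset.Icc (-(s : ℤ)) (s : ℤ),
      (a k : ℂ) * Complex.exp (2 * (Real.pi : ℂ) * Complex.I * (k : ℂ) * (t : ℂ)) := funext hF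
  have hFcont : Continuous F := by
    rw [hFeq]
    refine continuous_finset_sum _ (fun k _ => continuous_const.mul ?_)
    exact Complex.continuous_exp.comp (continuous_const.mul Complex.continuous_ofReal)
  set f : ℝ → ℝ := fun t => (F t).re with hf_def
  have hfcont : Continuous f := Complex.continuous_re.comp hFcont
  have hper : ∀ t : ℝ, F (t + 1) = F t := by
    intro t
    rw [hF, hF]
    refine Finset.sum_congr rfl (fun k _ => ?_)
    congr 1
    rw [show (2 * (Real.pi : ℂ) * Complex.I * (k : ℂ) * ((t + 1 : ℝ) : ℂ))
        = 2 * (Real.pi : ℂ) * Complex.I * (k : ℂ) * (t : ℂ) + (k : ℂ) * (2 * Real.pi * Complex.I) by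
      push_cast; ring]
    rw [Complex.exp_add, Complex.exp_int_mul_two_pi_mul_I, mul_one]
  have fper : Function.Periodic f 1 := by
    intro t; simp only [hf_def]; rw [hper t]
  obtain ⟨t0, ht0mem, ht0⟩ := isCompact_Icc.exists_isMinOn
    (Set.nonempty_Icc.mpr zero_le_one) hfcont.continuousOn
  obtain ⟨t1, ht1mem, ht1⟩ := isCompact_Icc.exists_isMaxOn
    (Set.nonempty_Icc.mpr zero_le_one) hfcont.continuousOn
  rw [isMinOn_iff] at ht0
  rw [isMaxOn_iff] at ht1
  have hfract : ∀ t : ℝ, f (Int.fract t) = f t := by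
    intro t
    rw [Int.fract]
    have := fper.sub_int_mul_eq (x := t) ⌊t⌋
    simpa using this
  have hfractmem : ∀ t : ℝ, Int.fract t ∈ Set.Icc (0:ℝ) 1 :=
    fun t => ⟨Int.fract_nonneg t, le_of_lt (Int.fract_lt_one t)⟩
  have hminall : ∀ t, f t0 ≤ f t := by
    intro t
    rw [← hfract t]
    exact ht0 _ (hfractmem t)
  have hmaxall : ∀ t, f t ≤ f t1 := by
    intro t
    rw [← hfract t]
    exact ht1 _ (hfractmem t)
  have hm0 : 0 < f t0 := hpos t0
  have hinf : (⨅ t : ℝ, (F t).re) = f t0 := by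
    refine le_antisymm (ciInf_le ⟨f t0, ?_⟩ t0) (le_ciInf hminall)
    rintro y ⟨t, rfl⟩
    exact hminall t
  have hsup : (⨆ t : ℝ, (F t).re) = f t1 := by
    refine le_antisymm (ciSup_le hmaxall) (le_ciSup ⟨f t1, ?_⟩ t1)
    rintro y ⟨t, rfl⟩
    exact hmaxall t
  rw [hinf] at hC
  rw [hinf, hsup] at hκ
  have hκ1 : 1 ≤ κ := by
    rw [hκ, le_div_iff₀ hm0, one_mul]
    exact hminall t1
  have hκ0 : 0 ≤ κ := le_trans zero_le_one hκ1
  have hu1 : 1 ≤ Real.sqrt κ := by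
    rw [show (1:ℝ) = Real.sqrt 1 by simp]
    exact Real.sqrt_le_sqrt hκ1
  have hq0' : 0 ≤ (Real.sqrt κ - 1) / (Real.sqrt κ + 1) :=
    div_nonneg (by linarith) (by linarith)
  have hlam0 : 0 ≤ lam := by rw [hlam]; exact Real.rpow_nonneg hq0' _
  have hC0 : 0 ≤ C := by
    rw [hC]
    refine mul_nonneg (by positivity) (le_trans zero_le_one (le_max_left _ _))
  have hCm : 1 / f t0 ≤ C := by
    rw [hC]
    nth_rewrite 1 [show 1 / f t0 = 1 / f t0 * 1 by ring]
    exact mul_le_mul_of_nonneg_left (le_max_left _ _) (by positivity)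
  have hFre : ∀ t, F t = ((f t : ℝ) : ℂ) := by
    intro t
    refine Complex.ext rfl ?_
    rw [Complex.ofReal_im]
    exact hreal t
  have hFne : ∀ t, F t ≠ 0 := by
    intro t h
    have := hpos t
    rw [h] at this
    simp at this
  have habs1 : ∀ (k' : ℤ) (t : ℝ),
      ‖Complex.exp (-(2 * (Real.pi : ℂ) * Complex.I * (k' : ℂ) * (t : ℂ)))‖ = 1 := by
    intro k' t
    rw [Complex.norm_exp]
    rw [show (-(2 * (Real.pi : ℂ) * Complex.I * (k' : ℂ) * (t : ℂ))).re = 0 by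
      simp [Complex.mul_re, Complex.mul_im]]
    exact Real.exp_zero
  have cont_exp : ∀ k' : ℤ, Continuous fun t : ℝ =>
      Complex.exp (-(2 * (Real.pi : ℂ) * Complex.I * (k' : ℂ) * (t : ℂ))) := by
    intro k'
    exact Complex.continuous_exp.comp ((continuous_const.mul Complex.continuous_ofReal).neg)
  -- vanishing of Fourier coefficients of powers of F
  have hpow : ∀ j : ℕ, ∀ k : ℤ, (j : ℤ) * s < |k| →
      (∫ t in (0:ℝ)..1, Complex.exp (-(2 * (Real.pi : ℂ) * Complex.I * (k : ℂ) * (t : ℂ))) * (F t) ^ j) = 0 := by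
    intro j
    induction j with
    | zero =>
      intro k hk
      have hk0 : k ≠ 0 := by
        intro h; rw [h] at hk; simp at hk
      rw [show (fun t : ℝ => Complex.exp (-(2 * (Real.pi : ℂ) * Complex.I * (k : ℂ) * (t : ℂ))) * (F t) ^ 0)
          = fun t : ℝ => Complex.exp (2 * (Real.pi : ℂ) * Complex.I * ((-k : ℤ) : ℂ) * (t : ℂ)) from
        funext fun t => by rw [pow_zero, mul_one]; congr 1; push_cast; ring]
      exact exp_int_orth (-k) (neg_ne_zero.mpr hk0)
    | succ j ih =>
      intro k hk
      have hrw : (fun t : ℝ => Complex.exp (-(2 * (Real.pi : ℂ) * Complex.I * (k : ℂ) * (t : ℂ))) * (F t) ^ (j+1))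
          = fun t : ℝ => ∑ l ∈ Finset.Icc (-(s : ℤ)) (s : ℤ),
              (a l : ℂ) * (Complex.exp (-(2 * (Real.pi : ℂ) * Complex.I * ((k - l : ℤ) : ℂ) * (t : ℂ))) * (F t) ^ j) := by
        funext t
        rw [pow_succ]
        nth_rewrite 2 [hF t]
        rw [Finset.mul_sum, Finset.mul_sum]
        refine Finset.sum_congr rfl (fun l _ => ?_)
        rw [show Complex.exp (-(2 * (Real.pi : ℂ) * Complex.I * ((k - l : ℤ) : ℂ) * (t : ℂ)))
            = Complex.exp (-(2 * (Real.pi : ℂ) * Complex.I * (k : ℂ) * (t : ℂ)))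
              * Complex.exp (2 * (Real.pi : ℂ) * Complex.I * (l : ℂ) * (t : ℂ)) by
          rw [← Complex.exp_add]; congr 1; push_cast; ring]
        ring
      rw [hrw]
      rw [intervalIntegral.integral_finset_sum]
      · refine Finset.sum_eq_zero (fun l hl => ?_)
        have hls : |l| ≤ (s : ℤ) := by
          rw [Finset.mem_Icc] at hl
          rw [abs_le]
          exact hl
        have hkl : (j : ℤ) * s < |k - l| := by
          have h1 := abs_sub_abs_le_abs_sub k l
          have h2 : ((j : ℤ) + 1) * (s : ℤ) = (j : ℤ) * s + s := by ring
          push_cast at hk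
          linarith
        rw [show (fun t : ℝ => (a l : ℂ) * (Complex.exp (-(2 * (Real.pi : ℂ) * Complex.I * ((k - l : ℤ) : ℂ) * (t : ℂ))) * (F t) ^ j))
            = fun t : ℝ => (a l : ℂ) * ((fun t : ℝ => Complex.exp (-(2 * (Real.pi : ℂ) * Complex.I * ((k - l : ℤ) : ℂ) * (t : ℂ))) * (F t) ^ j) t) from rfl]
        rw [intervalIntegral.integral_const_mul, ih (k - l) hkl, mul_zero]
      · intro l hl
        exact (continuous_const.mul ((cont_exp _).mul (hFcont.pow j))).intervalIntegrable _ _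
  intro k
  rcases eq_or_ne k 0 with rfl | hk0
  · -- k = 0
    rw [hb 0]
    rw [show (fun t : ℝ => Complex.exp (-(2 * (Real.pi : ℂ) * Complex.I * ((0:ℤ) : ℂ) * (t : ℂ))) / F t)
        = fun t : ℝ => 1 / F t from funext fun t => by push_cast; simp]
    have hbound := intervalIntegral.norm_integral_le_of_norm_le_const
      (a := (0:ℝ)) (b := 1) (C := 1 / f t0) (f := fun t : ℝ => 1 / F t) ?_
    · refine le_trans hbound ?_
      simp only [Int.natAbs_zero, pow_zero, mul_one]
      rw [show |(1:ℝ) - 0| = 1 by norm_num, mul_one]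
      exact hCm
    · intro t _
      show ‖1 / F t‖ ≤ 1 / f t0
      rw [hFre t]
      rw [show (1 : ℂ) / ((f t : ℝ) : ℂ) = (((1 / f t : ℝ)) : ℂ) by push_cast; ring]
      rw [Complex.norm_real, Real.norm_eq_abs, abs_of_pos (div_pos one_pos (hpos t))]
      exact one_div_le_one_div_of_le hm0 (hminall t)
  · -- k ≠ 0
    rcases eq_or_lt_of_le (hminall t1) with heq | hlt
    · -- constant case
      have hfconst : ∀ t, f t = f t0 := fun t => le_antisymm (heq ▸ hmaxall t) (hminall t)
      have hbk : b k = 0 := by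
        rw [hb k]
        rw [show (fun t : ℝ => Complex.exp (-(2 * (Real.pi : ℂ) * Complex.I * (k : ℂ) * (t : ℂ))) / F t)
            = fun t : ℝ => Complex.exp (2 * (Real.pi : ℂ) * Complex.I * ((-k : ℤ) : ℂ) * (t : ℂ)) * (((f t0 : ℝ) : ℂ))⁻¹ from
          funext fun t => by
            rw [div_eq_mul_inv, hFre t, hfconst t]
            congr 1
            congr 1
            push_cast; ring]
        rw [intervalIntegral.integral_mul_const, exp_int_orth (-k) (neg_ne_zero.mpr hk0), zero_mul]
      rw [hbk]
      simp only [norm_zero]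
      exact mul_nonneg hC0 (pow_nonneg hlam0 _)
    · -- nonconstant case
      set u : ℝ := Real.sqrt κ with hu_def
      have hu2 : u ^ 2 = κ := Real.sq_sqrt hκ0
      have hκgt1 : 1 < κ := by
        rw [hκ, lt_div_iff₀ hm0, one_mul]
        exact hlt
      have hugt1 : 1 < u := by
        nlinarith [hu2, hu1]
      have hMval : f t0 * u ^ 2 = f t1 := by
        rw [hu2, hκ]
        field_simp
      have hnatpos : 1 ≤ k.natAbs := Int.natAbs_pos.mpr hk0
      set n : ℕ := (k.natAbs - 1) / s with hn_def
      have hn1 : n * s < k.natAbs := by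
        have h := Nat.div_mul_le_self (k.natAbs - 1) s
        exact lt_of_le_of_lt h (by omega)
      have hn2 : k.natAbs ≤ (n + 1) * s := by
        have h1 := Nat.div_add_mod (k.natAbs - 1) s
        have h2 : (k.natAbs - 1) % s < s := Nat.mod_lt _ (by omega)
        rw [hn_def, show ((k.natAbs - 1) / s + 1) * s = s * ((k.natAbs - 1) / s) + s from by ring]
        generalize hG : s * ((k.natAbs - 1) / s) = p at h1 ⊢
        omega
      obtain ⟨P, hPdeg, hPb⟩ := cheb_approx (f t0) u hm0 hugt1 n
      have hmem : ∀ t, f t ∈ Set.Icc (f t0) (f t0 * u ^ 2) :=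
        fun t => ⟨hminall t, by rw [hMval]; exact hmaxall t⟩
      have hzero : ∀ j ∈ Finset.range (n + 1),
          (∫ t in (0:ℝ)..1, (P.coeff j : ℂ) *
            (Complex.exp (-(2 * (Real.pi : ℂ) * Complex.I * (k : ℂ) * (t : ℂ))) * (F t) ^ j)) = 0 := by
        intro j hj
        have hjn : j ≤ n := by simpa [Nat.lt_succ_iff] using hj
        have hjk : (j : ℤ) * s < |k| := by
          have h1 : ((n : ℤ) * s) < |k| := by
            rw [Int.abs_eq_natAbs]
            exact_mod_cast hn1
          have h2 : (j : ℤ) * s ≤ (n : ℤ) * s := by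
            have : (j : ℤ) ≤ n := by exact_mod_cast hjn
            exact mul_le_mul_of_nonneg_right this (by positivity)
          omega
        rw [intervalIntegral.integral_const_mul, hpow j k hjk, mul_zero]
      -- rewrite b k
      have hint1 : IntervalIntegrable (fun t : ℝ =>
          Complex.exp (-(2 * (Real.pi : ℂ) * Complex.I * (k : ℂ) * (t : ℂ))) *
            ((F t)⁻¹ - ∑ j ∈ Finset.range (n + 1), (P.coeff j : ℂ) * (F t) ^ j)) MeasureTheory.volume 0 1 := by
        refine Continuous.intervalIntegrable ?_ _ _
        exact (cont_exp k).mul ((hFcont.inv₀ hFne).sub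
          (continuous_finset_sum _ (fun j _ => continuous_const.mul (hFcont.pow j))))
      have hint2 : IntervalIntegrable (fun t : ℝ =>
          Complex.exp (-(2 * (Real.pi : ℂ) * Complex.I * (k : ℂ) * (t : ℂ))) *
            (∑ j ∈ Finset.range (n + 1), (P.coeff j : ℂ) * (F t) ^ j)) MeasureTheory.volume 0 1 := by
        refine Continuous.intervalIntegrable ?_ _ _
        exact (cont_exp k).mul (continuous_finset_sum _ (fun j _ => continuous_const.mul (hFcont.pow j)))
      have hbk : b k = ∫ t in (0:ℝ)..1,
          Complex.exp (-(2 * (Real.pi : ℂ) * Complex.I * (k : ℂ) * (t : ℂ))) *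
            ((F t)⁻¹ - ∑ j ∈ Finset.range (n + 1), (P.coeff j : ℂ) * (F t) ^ j) := by
        rw [hb k]
        have hsec : (∫ t in (0:ℝ)..1,
            Complex.exp (-(2 * (Real.pi : ℂ) * Complex.I * (k : ℂ) * (t : ℂ))) *
              (∑ j ∈ Finset.range (n + 1), (P.coeff j : ℂ) * (F t) ^ j)) = 0 := by
          rw [show (fun t : ℝ => Complex.exp (-(2 * (Real.pi : ℂ) * Complex.I * (k : ℂ) * (t : ℂ))) *
              (∑ j ∈ Finset.range (n + 1), (P.coeff j : ℂ) * (F t) ^ j))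
              = fun t : ℝ => ∑ j ∈ Finset.range (n + 1), (P.coeff j : ℂ) *
                (Complex.exp (-(2 * (Real.pi : ℂ) * Complex.I * (k : ℂ) * (t : ℂ))) * (F t) ^ j) from
            funext fun t => by rw [Finset.mul_sum]; exact Finset.sum_congr rfl fun j _ => by ring]
          rw [intervalIntegral.integral_finset_sum]
          · exact Finset.sum_eq_zero hzero
          · intro j hj
            exact (continuous_const.mul ((cont_exp _).mul (hFcont.pow j))).intervalIntegrable _ _
        have hsum : (∫ t in (0:ℝ)..1,
            Complex.exp (-(2 * (Real.pi : ℂ) * Complex.I * (k : ℂ) * (t : ℂ))) / F t)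
            = (∫ t in (0:ℝ)..1,
              Complex.exp (-(2 * (Real.pi : ℂ) * Complex.I * (k : ℂ) * (t : ℂ))) *
                ((F t)⁻¹ - ∑ j ∈ Finset.range (n + 1), (P.coeff j : ℂ) * (F t) ^ j))
              + (∫ t in (0:ℝ)..1,
                Complex.exp (-(2 * (Real.pi : ℂ) * Complex.I * (k : ℂ) * (t : ℂ))) *
                  (∑ j ∈ Finset.range (n + 1), (P.coeff j : ℂ) * (F t) ^ j)) := by
          rw [← intervalIntegral.integral_add hint1 hint2]
          refine intervalIntegral.integral_congr (fun t _ => ?_)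
          simp only [div_eq_mul_inv]
          ring
        rw [hsum, hsec, add_zero]
      -- bound
      set B : ℝ := 1 / f t0 * ((1 + u) ^ 2 / (2 * u ^ 2)) * ((u - 1) / (u + 1)) ^ (n + 1) with hB_def
      have hbbk : ‖b k‖ ≤ B := by
        rw [hbk]
        have hbound := intervalIntegral.norm_integral_le_of_norm_le_const
          (a := (0:ℝ)) (b := 1) (C := B) (f := fun t : ℝ =>
            Complex.exp (-(2 * (Real.pi : ℂ) * Complex.I * (k : ℂ) * (t : ℂ))) *
              ((F t)⁻¹ - ∑ j ∈ Finset.range (n + 1), (P.coeff j : ℂ) * (F t) ^ j)) ?_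
        · refine le_trans hbound ?_
          rw [show |(1:ℝ) - 0| = 1 by norm_num, mul_one]
        · intro t _
          show ‖Complex.exp (-(2 * (Real.pi : ℂ) * Complex.I * (k : ℂ) * (t : ℂ))) *
              ((F t)⁻¹ - ∑ j ∈ Finset.range (n + 1), (P.coeff j : ℂ) * (F t) ^ j)‖ ≤ B
          rw [norm_mul]
          rw [show ‖Complex.exp (-(2 * (Real.pi : ℂ) * Complex.I * (k : ℂ) * (t : ℂ)))‖ = 1 from
            habs1 k t]
          rw [one_mul]
          have hPe : P.eval (f t) = ∑ j ∈ Finset.range (n + 1), P.coeff j * (f t) ^ j :=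
            Polynomial.eval_eq_sum_range' (lt_of_le_of_lt hPdeg (Nat.lt_succ_self n)) _
          have hcast : (F t)⁻¹ - ∑ j ∈ Finset.range (n + 1), (P.coeff j : ℂ) * (F t) ^ j
              = (((1 / f t - P.eval (f t) : ℝ)) : ℂ) := by
            rw [hFre t, hPe]
            push_cast
            ring
          rw [hcast, Complex.norm_real, Real.norm_eq_abs]
          exact hPb _ (hmem t)
      refine le_trans hbbk ?_
      -- B ≤ C * lam ^ k.natAbs
      set q : ℝ := (u - 1) / (u + 1) with hq_def
      have hq0 : 0 < q := div_pos (by linarith) (by linarith)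
      have hq1 : q ≤ 1 := by
        rw [div_le_one (by linarith)]; linarith
      have hlamq : lam = q ^ ((1:ℝ) / (s:ℝ)) := hlam
      have hs0 : (0:ℝ) < (s:ℝ) := by exact_mod_cast hs
      have hlampow : lam ^ k.natAbs = q ^ ((k.natAbs : ℝ) / (s:ℝ)) := by
        rw [hlamq, ← Real.rpow_natCast (q ^ ((1:ℝ) / (s:ℝ))) k.natAbs,
          ← Real.rpow_mul (le_of_lt hq0)]
        congr 1
        field_simp
      have hqpow : q ^ (n + 1) ≤ q ^ ((k.natAbs : ℝ) / (s:ℝ)) := by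
        rw [← Real.rpow_natCast q (n + 1)]
        refine Real.rpow_le_rpow_of_exponent_ge hq0 hq1 ?_
        rw [div_le_iff₀ hs0]
        push_cast
        exact_mod_cast (by exact_mod_cast hn2 : (k.natAbs : ℝ) ≤ ((n + 1 : ℕ) : ℝ) * (s : ℝ))
      have hCge : 1 / f t0 * ((1 + u) ^ 2 / (2 * u ^ 2)) ≤ C := by
        rw [hC, ← hu2]
        exact mul_le_mul_of_nonneg_left (le_max_right _ _) (by positivity)
      calc B = (1 / f t0 * ((1 + u) ^ 2 / (2 * u ^ 2))) * q ^ (n + 1) := by rw [hB_def]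
        _ ≤ C * q ^ ((k.natAbs : ℝ) / (s:ℝ)) := by
            refine mul_le_mul hCge hqpow (by positivity) hC0
        _ = C * lam ^ k.natAbs := by rw [hlampow]
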